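/- For all m, n ∈ ℤ: if f_n = R then Q_{3m,n} = Q_{3m,n+1} and Q_{3m+1,n} = Q_{3m+2,n+1}; if f_n = L then Q_{3m+1,n} = Q_{3m,n+1} and Q_{3m+2,n} = Q_{3m+2,n+1}. Moreover these are the only coincidences between the sequences (Q_{m,n})_{m∈ℤ} and (Q_{m',n+1})_{m'∈ℤ}: if Q_{m,n} = Q_{m',n+1} then the pair (m, m') is one of the pairs listed above. -/

import Mathlib

/-- The relators of the presentation ⟨A, B, C | A² = B² = C² = 1⟩. -/
def rels : Set (FreeGroup (Fin 3)) :=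
  {FreeGroup.of 0 * FreeGroup.of 0, FreeGroup.of 1 * FreeGroup.of 1,
   FreeGroup.of 2 * FreeGroup.of 2}

/-- `G` is the group ⟨A, B, C | A² = B² = C² = 1⟩, the free product of three copies of ℤ/2. -/
abbrev G : Type := PresentedGroup rels

def A : G := PresentedGroup.of 0
def B : G := PresentedGroup.of 1
def C : G := PresentedGroup.of 2

/-- The distinguished element `D = C·B·A`. -/
def D : G := C * B * A

/-! ### Basic relations in `G` -/

lemma gen_sq_eq_one (i : Fin 3) :
    (PresentedGroup.of (rels := rels) i) * PresentedGroup.of i = 1 := by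
  have h : FreeGroup.of i * FreeGroup.of i ∈ Subgroup.normalClosure rels := by
    apply Subgroup.subset_normalClosure
    fin_cases i
    · exact Set.mem_insert _ _
    · exact Set.mem_insert_of_mem _ (Set.mem_insert _ _)
    · exact Set.mem_insert_of_mem _ (Set.mem_insert_of_mem _ rfl)
  have h2 : (PresentedGroup.mk rels) (FreeGroup.of i * FreeGroup.of i) = 1 := by
    rwa [← QuotientGroup.eq_one_iff] at h
  exact h2

lemma hA2 : A * A = 1 := gen_sq_eq_one 0
lemma hB2 : B * B = 1 := gen_sq_eq_one 1
lemma hC2 : C * C = 1 := gen_sq_eq_one 2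
lemma hBinv : B⁻¹ = B := inv_eq_of_mul_eq_one_right hB2

/-! ### A matrix representation of `G` -/

abbrev M2 : Type := Matrix (Fin 2) (Fin 2) ℤ

def aM : M2 := !![-2,-3;1,2]
def bM : M2 := !![-2,-1;3,2]
def cM : M2 := !![1,0;0,-1]
def dM : M2 := !![3,4;4,5]

lemma entry_mul (M N : M2) (i j : Fin 2) :
    (M * N) i j = M i 0 * N 0 j + M i 1 * N 1 j := by
  rw [Matrix.mul_apply, Fin.sum_univ_two]

lemma dM00 : dM 0 0 = 3 := rfl
lemma dM01 : dM 0 1 = 4 := rfl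
lemma dM10 : dM 1 0 = 4 := rfl
lemma dM11 : dM 1 1 = 5 := rfl

/-- The key invariant of positive powers of `dM`: they are symmetric with positive
entries satisfying suitable linear relations. -/
lemma key (k : ℕ) :
    (dM^(k+1)) 0 1 = (dM^(k+1)) 1 0 ∧
    2*((dM^(k+1)) 0 0) + (dM^(k+1)) 0 1 = 2*((dM^(k+1)) 1 1) ∧
    0 < (dM^(k+1)) 0 0 ∧ 0 < (dM^(k+1)) 0 1 ∧
    (dM^(k+1)) 0 1 < 2 * ((dM^(k+1)) 0 0) := by
  induction k with
  | zero =>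
    refine ⟨?_, ?_, ?_, ?_, ?_⟩ <;> norm_num [pow_one, dM00, dM01, dM10, dM11]
  | succ k ih =>
    obtain ⟨h1, h2, h3, h4, h5⟩ := ih
    have hp : dM^(k+1+1) = dM^(k+1) * dM := by rw [pow_succ]
    rw [hp]
    simp only [entry_mul, dM00, dM01, dM10, dM11]
    refine ⟨by linarith, by linarith, by linarith, by linarith, by linarith⟩

lemma aM2 : aM * aM = 1 := by simp [aM, Matrix.mul_fin_two, Matrix.one_fin_two]
lemma bM2 : bM * bM = 1 := by simp [bM, Matrix.mul_fin_two, Matrix.one_fin_two]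
lemma cM2 : cM * cM = 1 := by simp [cM, Matrix.mul_fin_two, Matrix.one_fin_two]

def aU : M2ˣ := ⟨aM, aM, aM2, aM2⟩
def bU : M2ˣ := ⟨bM, bM, bM2, bM2⟩
def cU : M2ˣ := ⟨cM, cM, cM2, cM2⟩
def dU : M2ˣ := cU * bU * aU

lemma dUval : (dU : M2) = dM := by
  show cM * bM * aM = dM
  simp [aM, bM, cM, dM, Matrix.mul_fin_two]

def babM : M2 := !![6,5;-7,-6]
def bcbM : M2 := !![7,4;-12,-7]

lemma hbabval : ((bU * aU * bU⁻¹ : M2ˣ) : M2) = babM := by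
  show bM * aM * bM = babM
  simp [aM, bM, babM, Matrix.mul_fin_two]
lemma hbcbval : ((bU * cU * bU⁻¹ : M2ˣ) : M2) = bcbM := by
  show bM * cM * bM = bcbM
  simp [bM, cM, bcbM, Matrix.mul_fin_two]

lemma aM00 : aM 0 0 = -2 := rfl
lemma aM01 : aM 0 1 = -3 := rfl
lemma aM10 : aM 1 0 = 1 := rfl
lemma aM11 : aM 1 1 = 2 := rfl
lemma bM00 : bM 0 0 = -2 := rfl
lemma bM01 : bM 0 1 = -1 := rfl
lemma bM10 : bM 1 0 = 3 := rfl
lemma bM11 : bM 1 1 = 2 := rfl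
lemma cM00 : cM 0 0 = 1 := rfl
lemma cM01 : cM 0 1 = 0 := rfl
lemma cM10 : cM 1 0 = 0 := rfl
lemma cM11 : cM 1 1 = -1 := rfl
lemma babM00 : babM 0 0 = 6 := rfl
lemma babM01 : babM 0 1 = 5 := rfl
lemma babM10 : babM 1 0 = -7 := rfl
lemma babM11 : babM 1 1 = -6 := rfl
lemma bcbM00 : bcbM 0 0 = 7 := rfl
lemma bcbM01 : bcbM 0 1 = 4 := rfl
lemma bcbM10 : bcbM 1 0 = -12 := rfl
lemma bcbM11 : bcbM 1 1 = -7 := rfl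

lemma val_zpow_pos (k : ℕ) : ((dU ^ ((k:ℤ)+1) : M2ˣ) : M2) = dM ^ (k+1) := by
  have h : ((k:ℤ)+1) = ((k+1 : ℕ) : ℤ) := by push_cast; ring
  rw [h, zpow_natCast, Units.val_pow_eq_pow_val, dUval]

lemma comm_entry (N x : M2) (h : N * x = x * N) (i j : Fin 2) :
    N i 0 * x 0 j + N i 1 * x 1 j = x i 0 * N 0 j + x i 1 * N 1 j := by
  have hh := congrFun (congrFun h i) j
  rwa [entry_mul, entry_mul] at hh

lemma mix_entry (N x y : M2) (h : N * x = y * N) (i j : Fin 2) :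
    N i 0 * x 0 j + N i 1 * x 1 j = y i 0 * N 0 j + y i 1 * N 1 j := by
  have hh := congrFun (congrFun h i) j
  rwa [entry_mul, entry_mul] at hh

/-- If a positive power of `dM` never commutes with `x`, then no nonzero integer power of
`dU` commutes with `x`. -/
lemma no_comm (x : M2ˣ)
    (hmat : ∀ k : ℕ, ¬ (dM^(k+1) * (x : M2) = (x : M2) * dM^(k+1))) :
    ∀ t : ℤ, dU ^ t * x = x * dU ^ t → t = 0 := by
  intro t h
  by_contra ht
  have hc : Commute (dU ^ t) x := h
  rcases lt_or_gt_of_ne ht with hneg | hpos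
  · have hc2 : Commute (dU ^ (-t)) x := by rw [zpow_neg]; exact hc.inv_left
    obtain ⟨k, hk⟩ : ∃ k : ℕ, -t = (k:ℤ)+1 := ⟨(-t-1).toNat, by omega⟩
    rw [hk] at hc2
    have hm := congrArg (Units.val) hc2.eq
    rw [Units.val_mul, Units.val_mul, val_zpow_pos] at hm
    exact hmat k hm
  · obtain ⟨k, hk⟩ : ∃ k : ℕ, t = (k:ℤ)+1 := ⟨(t-1).toNat, by omega⟩
    rw [hk] at hc
    have hm := congrArg (Units.val) hc.eq
    rw [Units.val_mul, Units.val_mul, val_zpow_pos] at hm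
    exact hmat k hm

lemma factA : ∀ t : ℤ, dU ^ t * aU = aU * dU ^ t → t = 0 := by
  apply no_comm
  intro k h
  obtain ⟨s1, s2, s3, s4, s5⟩ := key k
  have e := comm_entry _ _ h 0 0
  simp only [show (aU:M2) = aM from rfl, aM00, aM01, aM10, aM11] at e
  linarith [e, s1]

lemma factB : ∀ t : ℤ, dU ^ t * bU = bU * dU ^ t → t = 0 := by
  apply no_comm
  intro k h
  obtain ⟨s1, s2, s3, s4, s5⟩ := key k
  have e := comm_entry _ _ h 0 0
  simp only [show (bU:M2) = bM from rfl, bM00, bM01, bM10, bM11] at e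
  linarith [e, s1]

lemma factC : ∀ t : ℤ, dU ^ t * cU = cU * dU ^ t → t = 0 := by
  apply no_comm
  intro k h
  obtain ⟨s1, s2, s3, s4, s5⟩ := key k
  have e := comm_entry _ _ h 0 1
  simp only [show (cU:M2) = cM from rfl, cM00, cM01, cM10, cM11] at e
  linarith [e, s1]

/-- A generic "never conjugate along powers of `dU`" criterion. -/
lemma no_conj (x y : M2ˣ) (h0 : (x : M2) 0 0 ≠ (y : M2) 0 0)
    (hpos : ∀ k : ℕ, ¬ (dM^(k+1) * (x:M2) = (y:M2) * dM^(k+1)))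
    (hneg : ∀ k : ℕ, ¬ ((x:M2) * dM^(k+1) = dM^(k+1) * (y:M2))) :
    ∀ t : ℤ, dU ^ t * x ≠ y * dU ^ t := by
  intro t h
  rcases lt_trichotomy t 0 with hlt | rfl | hgt
  · obtain ⟨k, hk⟩ : ∃ k : ℕ, -t = (k:ℤ)+1 := ⟨(-t-1).toNat, by omega⟩
    have ht : t = -((k:ℤ)+1) := by omega
    rw [ht, zpow_neg] at h
    set u := dU ^ ((k:ℤ)+1) with hu
    have h2 : (x : M2ˣ) * u = u * y := by
      have h3 := congrArg (fun z => u * z * u) h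
      simpa [mul_assoc] using h3
    have hm := congrArg (Units.val) h2
    rw [Units.val_mul, Units.val_mul, hu, val_zpow_pos] at hm
    exact hneg k hm
  · rw [zpow_zero, one_mul, mul_one] at h
    exact h0 (by rw [h])
  · obtain ⟨k, hk⟩ : ∃ k : ℕ, t = (k:ℤ)+1 := ⟨(t-1).toNat, by omega⟩
    rw [hk] at h
    have hm := congrArg (Units.val) h
    rw [Units.val_mul, Units.val_mul, val_zpow_pos] at hm
    exact hpos k hm

lemma factBAB : ∀ t : ℤ, dU ^ t * aU ≠ (bU * aU * bU⁻¹) * dU ^ t := by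
  apply no_conj
  · rw [hbabval]
    simp only [show (aU:M2) = aM from rfl, aM00, babM00]
    norm_num
  · intro k h
    rw [hbabval] at h
    obtain ⟨s1, s2, s3, s4, s5⟩ := key k
    have e := mix_entry _ _ _ h 0 0
    simp only [show (aU:M2) = aM from rfl, aM00, aM01, aM10, aM11,
      babM00, babM01, babM10, babM11] at e
    linarith [e, s1]
  · intro k h
    rw [hbabval] at h
    obtain ⟨s1, s2, s3, s4, s5⟩ := key k
    have e := mix_entry _ _ _ h.symm 1 1
    simp only [show (aU:M2) = aM from rfl, aM00, aM01, aM10, aM11,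
      babM00, babM01, babM10, babM11] at e
    linarith [e, s1]

lemma factBCB : ∀ t : ℤ, dU ^ t * cU ≠ (bU * cU * bU⁻¹) * dU ^ t := by
  apply no_conj
  · rw [hbcbval]
    simp only [show (cU:M2) = cM from rfl, cM00, bcbM00]
    norm_num
  · intro k h
    rw [hbcbval] at h
    obtain ⟨s1, s2, s3, s4, s5⟩ := key k
    have e := mix_entry _ _ _ h 0 0
    simp only [show (cU:M2) = cM from rfl, cM00, cM01, cM10, cM11,
      bcbM00, bcbM01, bcbM10, bcbM11] at e
    linarith [e, s1]
  · intro k h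
    rw [hbcbval] at h
    obtain ⟨s1, s2, s3, s4, s5⟩ := key k
    have e := mix_entry _ _ _ h.symm 1 1
    simp only [show (cU:M2) = cM from rfl, cM00, cM01, cM10, cM11,
      bcbM00, bcbM01, bcbM10, bcbM11] at e
    linarith [e, s1]

/-! ### The homomorphism `φ : G →* M2ˣ` -/

def gensφ : Fin 3 → M2ˣ := ![aU, bU, cU]

lemma gensφ_sq (i : Fin 3) : gensφ i * gensφ i = 1 := by
  fin_cases i <;> apply Units.ext
  · exact aM2
  · exact bM2
  · exact cM2

lemma hrelsφ : ∀ r ∈ rels, FreeGroup.lift gensφ r = 1 := by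
  intro r hr
  simp only [rels, Set.mem_insert_iff, Set.mem_singleton_iff] at hr
  rcases hr with rfl | rfl | rfl <;>
    · rw [map_mul]
      simp only [FreeGroup.lift_apply_of]
      exact gensφ_sq _

def φ : G →* M2ˣ := PresentedGroup.toGroup hrelsφ

lemma φA : φ A = aU := PresentedGroup.toGroup.of hrelsφ
lemma φB : φ B = bU := PresentedGroup.toGroup.of hrelsφ
lemma φC : φ C = cU := PresentedGroup.toGroup.of hrelsφ
lemma φD : φ D = dU := by
  rw [show D = C * B * A from rfl, map_mul, map_mul, φA, φB, φC]; rfl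

/-! ### The abelianization `ψ : G →* Multiplicative ((ZMod 2)³)` -/

abbrev V : Type := Multiplicative (ZMod 2 × ZMod 2 × ZMod 2)

def gensψ : Fin 3 → V :=
  ![Multiplicative.ofAdd (1,0,0), Multiplicative.ofAdd (0,1,0), Multiplicative.ofAdd (0,0,1)]

lemma hrelsψ : ∀ r ∈ rels, FreeGroup.lift gensψ r = 1 := by
  intro r hr
  simp only [rels, Set.mem_insert_iff, Set.mem_singleton_iff] at hr
  rcases hr with rfl | rfl | rfl <;>
    · rw [map_mul]
      simp only [FreeGroup.lift_apply_of]
      decide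

def ψ : G →* V := PresentedGroup.toGroup hrelsψ

lemma ψA : ψ A = Multiplicative.ofAdd (1,0,0) := PresentedGroup.toGroup.of hrelsψ
lemma ψB : ψ B = Multiplicative.ofAdd (0,1,0) := PresentedGroup.toGroup.of hrelsψ
lemma ψC : ψ C = Multiplicative.ofAdd (0,0,1) := PresentedGroup.toGroup.of hrelsψ

lemma psi_conj (g x : G) : ψ (g * x * g⁻¹) = ψ x := by
  rw [map_mul, map_mul, map_inv, mul_inv_cancel_comm]

/-! ### A rearrangement lemma -/

lemma conj_zpow_eq {H : Type*} [Group H] (u x y : H) (j k : ℤ)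
    (h : u^j * x * (u^j)⁻¹ = u^k * y * (u^k)⁻¹) : u^(j-k) * x = y * u^(j-k) := by
  have h' := congrArg (fun z => (u^k)⁻¹ * z * u^j) h
  try simp only at h'
  group at h' ⊢
  convert h' using 2

/-- The identities between consecutive sequences of elliptic generators, and the fact
that they are the only coincidences between the sequences (Q_{·,n}) and (Q_{·,n+1}). -/
theorem stmt11
    (R L : MulAut G)
    (hRA : R A = A) (hRB : R B = B * C * B⁻¹) (hRC : R C = B)
    (hLA : L A = B) (hLB : L B = B * A * B⁻¹) (hLC : L C = C)
    (P : ℤ → G)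
    (hP0 : ∀ m : ℤ, P (3 * m) = D ^ m * A * (D ^ m)⁻¹)
    (hP1 : ∀ m : ℤ, P (3 * m + 1) = D ^ m * B * (D ^ m)⁻¹)
    (hP2 : ∀ m : ℤ, P (3 * m + 2) = D ^ m * C * (D ^ m)⁻¹)
    (p : ℤ) (hp : 2 ≤ p)
    (f : ℤ → MulAut G) (hfRL : ∀ n : ℤ, f n = R ∨ f n = L)
    (hfper : ∀ n : ℤ, f (n + p) = f n) (hf0 : f 0 = L) (hf1 : f 1 = R)
    (F : ℤ → MulAut G) (hF0 : F 0 = 1) (hF : ∀ n : ℤ, F n = F (n - 1) * f n)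
    (Q : ℤ → ℤ → G) (hQ : ∀ m n : ℤ, Q m n = F (n - 1) (P m)) :
    (∀ m n : ℤ,
      (f n = R → Q (3 * m) n = Q (3 * m) (n + 1) ∧ Q (3 * m + 1) n = Q (3 * m + 2) (n + 1)) ∧
      (f n = L → Q (3 * m + 1) n = Q (3 * m) (n + 1) ∧ Q (3 * m + 2) n = Q (3 * m + 2) (n + 1))) ∧
    ∀ n m m' : ℤ, Q m n = Q m' (n + 1) →
      ∃ k : ℤ,
        (f n = R ∧ ((m = 3 * k ∧ m' = 3 * k) ∨ (m = 3 * k + 1 ∧ m' = 3 * k + 2))) ∨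
        (f n = L ∧ ((m = 3 * k + 1 ∧ m' = 3 * k) ∨ (m = 3 * k + 2 ∧ m' = 3 * k + 2))) := by
  -- `R` and `L` fix `D`
  have hRD : R D = D := by
    calc R D = R C * R B * R A := by rw [show D = C * B * A from rfl, map_mul, map_mul]
    _ = B * (B * C * B⁻¹) * A := by rw [hRA, hRB, hRC]
    _ = (B * B) * (C * B⁻¹ * A) := by group
    _ = C * B * A := by rw [hB2, one_mul, hBinv]
    _ = D := rfl
  have hLD : L D = D := by
    calc L D = L C * L B * L A := by rw [show D = C * B * A from rfl, map_mul, map_mul]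
    _ = C * (B * A * B⁻¹) * B := by rw [hLA, hLB, hLC]
    _ = C * B * A := by group
    _ = D := rfl
  have hRDz : ∀ m : ℤ, R (D ^ m) = D ^ m := fun m => by rw [map_zpow, hRD]
  have hLDz : ∀ m : ℤ, L (D ^ m) = D ^ m := fun m => by rw [map_zpow, hLD]
  -- the basic equivalence
  have hQiff : ∀ m m' n : ℤ, (Q m n = Q m' (n+1) ↔ P m = (f n) (P m')) := by
    intro m m' n
    rw [hQ, hQ, show (n+1-1 : ℤ) = n by ring, hF n, MulAut.mul_apply]
    exact ⟨fun h => (F (n-1)).injective h, fun h => by rw [h]⟩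
  constructor
  · intro m n
    constructor
    · intro hfn
      constructor
      · rw [hQiff, hfn, hP0, map_mul, map_mul, map_inv, hRDz, hRA]
      · rw [hQiff, hfn, hP1, hP2, map_mul, map_mul, map_inv, hRDz, hRC]
    · intro hfn
      constructor
      · rw [hQiff, hfn, hP1, hP0, map_mul, map_mul, map_inv, hLDz, hLA]
      · rw [hQiff, hfn, hP2, map_mul, map_mul, map_inv, hLDz, hLC]
  · intro n m m' hQQ
    rw [hQiff] at hQQ
    rcases hfRL n with hfn | hfn <;> rw [hfn] at hQQ
    · -- f n = R
      rcases (show m' % 3 = 0 ∨ m' % 3 = 1 ∨ m' % 3 = 2 by omega) with h' | h' | h'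
      · obtain ⟨k, rfl⟩ : ∃ k, m' = 3*k := ⟨m'/3, by omega⟩
        rw [hP0, map_mul, map_mul, map_inv, hRDz, hRA] at hQQ
        rcases (show m % 3 = 0 ∨ m % 3 = 1 ∨ m % 3 = 2 by omega) with h | h | h
        · obtain ⟨j, rfl⟩ : ∃ j, m = 3*j := ⟨m/3, by omega⟩
          rw [hP0] at hQQ
          have hφ := congrArg φ hQQ
          simp only [map_mul, map_inv, map_zpow, φA, φD] at hφ
          have hjk := factA _ (conj_zpow_eq _ _ _ _ _ hφ)
          exact ⟨k, Or.inl ⟨hfn, Or.inl ⟨by omega, rfl⟩⟩⟩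
        · obtain ⟨j, rfl⟩ : ∃ j, m = 3*j+1 := ⟨m/3, by omega⟩
          rw [hP1] at hQQ
          have hψ := congrArg ψ hQQ
          simp only [psi_conj, ψA, ψB] at hψ
          exact absurd hψ (by decide)
        · obtain ⟨j, rfl⟩ : ∃ j, m = 3*j+2 := ⟨m/3, by omega⟩
          rw [hP2] at hQQ
          have hψ := congrArg ψ hQQ
          simp only [psi_conj, ψA, ψC] at hψ
          exact absurd hψ (by decide)
      · obtain ⟨k, rfl⟩ : ∃ k, m' = 3*k+1 := ⟨m'/3, by omega⟩
        rw [hP1, map_mul, map_mul, map_inv, hRDz, hRB] at hQQ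
        rcases (show m % 3 = 0 ∨ m % 3 = 1 ∨ m % 3 = 2 by omega) with h | h | h
        · obtain ⟨j, rfl⟩ : ∃ j, m = 3*j := ⟨m/3, by omega⟩
          rw [hP0] at hQQ
          have hψ := congrArg ψ hQQ
          simp only [psi_conj, ψA, ψC] at hψ
          exact absurd hψ (by decide)
        · obtain ⟨j, rfl⟩ : ∃ j, m = 3*j+1 := ⟨m/3, by omega⟩
          rw [hP1] at hQQ
          have hψ := congrArg ψ hQQ
          simp only [psi_conj, ψB, ψC] at hψ
          exact absurd hψ (by decide)
        · obtain ⟨j, rfl⟩ : ∃ j, m = 3*j+2 := ⟨m/3, by omega⟩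
          rw [hP2] at hQQ
          have hφ := congrArg φ hQQ
          simp only [map_mul, map_inv, map_zpow, φB, φC, φD] at hφ
          exact absurd (conj_zpow_eq _ _ _ _ _ hφ) (factBCB _)
      · obtain ⟨k, rfl⟩ : ∃ k, m' = 3*k+2 := ⟨m'/3, by omega⟩
        rw [hP2, map_mul, map_mul, map_inv, hRDz, hRC] at hQQ
        rcases (show m % 3 = 0 ∨ m % 3 = 1 ∨ m % 3 = 2 by omega) with h | h | h
        · obtain ⟨j, rfl⟩ : ∃ j, m = 3*j := ⟨m/3, by omega⟩
          rw [hP0] at hQQ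
          have hψ := congrArg ψ hQQ
          simp only [psi_conj, ψA, ψB] at hψ
          exact absurd hψ (by decide)
        · obtain ⟨j, rfl⟩ : ∃ j, m = 3*j+1 := ⟨m/3, by omega⟩
          rw [hP1] at hQQ
          have hφ := congrArg φ hQQ
          simp only [map_mul, map_inv, map_zpow, φB, φD] at hφ
          have hjk := factB _ (conj_zpow_eq _ _ _ _ _ hφ)
          exact ⟨k, Or.inl ⟨hfn, Or.inr ⟨by omega, rfl⟩⟩⟩
        · obtain ⟨j, rfl⟩ : ∃ j, m = 3*j+2 := ⟨m/3, by omega⟩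
          rw [hP2] at hQQ
          have hψ := congrArg ψ hQQ
          simp only [psi_conj, ψB, ψC] at hψ
          exact absurd hψ (by decide)
    · -- f n = L
      rcases (show m' % 3 = 0 ∨ m' % 3 = 1 ∨ m' % 3 = 2 by omega) with h' | h' | h'
      · obtain ⟨k, rfl⟩ : ∃ k, m' = 3*k := ⟨m'/3, by omega⟩
        rw [hP0, map_mul, map_mul, map_inv, hLDz, hLA] at hQQ
        rcases (show m % 3 = 0 ∨ m % 3 = 1 ∨ m % 3 = 2 by omega) with h | h | h
        · obtain ⟨j, rfl⟩ : ∃ j, m = 3*j := ⟨m/3, by omega⟩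
          rw [hP0] at hQQ
          have hψ := congrArg ψ hQQ
          simp only [psi_conj, ψA, ψB] at hψ
          exact absurd hψ (by decide)
        · obtain ⟨j, rfl⟩ : ∃ j, m = 3*j+1 := ⟨m/3, by omega⟩
          rw [hP1] at hQQ
          have hφ := congrArg φ hQQ
          simp only [map_mul, map_inv, map_zpow, φB, φD] at hφ
          have hjk := factB _ (conj_zpow_eq _ _ _ _ _ hφ)
          exact ⟨k, Or.inr ⟨hfn, Or.inl ⟨by omega, rfl⟩⟩⟩
        · obtain ⟨j, rfl⟩ : ∃ j, m = 3*j+2 := ⟨m/3, by omega⟩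
          rw [hP2] at hQQ
          have hψ := congrArg ψ hQQ
          simp only [psi_conj, ψB, ψC] at hψ
          exact absurd hψ (by decide)
      · obtain ⟨k, rfl⟩ : ∃ k, m' = 3*k+1 := ⟨m'/3, by omega⟩
        rw [hP1, map_mul, map_mul, map_inv, hLDz, hLB] at hQQ
        rcases (show m % 3 = 0 ∨ m % 3 = 1 ∨ m % 3 = 2 by omega) with h | h | h
        · obtain ⟨j, rfl⟩ : ∃ j, m = 3*j := ⟨m/3, by omega⟩
          rw [hP0] at hQQ
          have hφ := congrArg φ hQQ
          simp only [map_mul, map_inv, map_zpow, φA, φB, φD] at hφ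
          exact absurd (conj_zpow_eq _ _ _ _ _ hφ) (factBAB _)
        · obtain ⟨j, rfl⟩ : ∃ j, m = 3*j+1 := ⟨m/3, by omega⟩
          rw [hP1] at hQQ
          have hψ := congrArg ψ hQQ
          simp only [psi_conj, ψA, ψB] at hψ
          exact absurd hψ (by decide)
        · obtain ⟨j, rfl⟩ : ∃ j, m = 3*j+2 := ⟨m/3, by omega⟩
          rw [hP2] at hQQ
          have hψ := congrArg ψ hQQ
          simp only [psi_conj, ψA, ψC] at hψ
          exact absurd hψ (by decide)
      · obtain ⟨k, rfl⟩ : ∃ k, m' = 3*k+2 := ⟨m'/3, by omega⟩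
        rw [hP2, map_mul, map_mul, map_inv, hLDz, hLC] at hQQ
        rcases (show m % 3 = 0 ∨ m % 3 = 1 ∨ m % 3 = 2 by omega) with h | h | h
        · obtain ⟨j, rfl⟩ : ∃ j, m = 3*j := ⟨m/3, by omega⟩
          rw [hP0] at hQQ
          have hψ := congrArg ψ hQQ
          simp only [psi_conj, ψA, ψC] at hψ
          exact absurd hψ (by decide)
        · obtain ⟨j, rfl⟩ : ∃ j, m = 3*j+1 := ⟨m/3, by omega⟩
          rw [hP1] at hQQ
          have hψ := congrArg ψ hQQ
          simp only [psi_conj, ψB, ψC] at hψ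
          exact absurd hψ (by decide)
        · obtain ⟨j, rfl⟩ : ∃ j, m = 3*j+2 := ⟨m/3, by omega⟩
          rw [hP2] at hQQ
          have hφ := congrArg φ hQQ
          simp only [map_mul, map_inv, map_zpow, φC, φD] at hφ
          have hjk := factC _ (conj_zpow_eq _ _ _ _ _ hφ)
          exact ⟨k, Or.inr ⟨hfn, Or.inr ⟨by omega, rfl⟩⟩⟩
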